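/- Let (I_k)_{k<ω} be the partition of ℕ into consecutive finite intervals with |I_k| = 2^k (so I_k = [2^k − 1, 2^{k+1} − 1)). Let D be a nonprincipal ultrafilter on ℕ, suppose d is long for k, and let (q_l)_{l<ω} be a sequence of LE-conditions in Q_{d,s,k}. Then there exists an LE-condition q^∞ such that for every LE-condition r with r ≤ q^∞, the set {k ∈ ℕ : there exists an LE-condition r′ with r′ ≤ r and |{l ∈ I_k : r′ ≤ q_l}| ≥ (1 − 1/|d|)·2^k} belongs to D. (Forcing-free form of: Q_{d,s,k} is (D, 1/|d|)-lim-linked, i.e., LE_b has ultrafilter-limits for intervals.) -/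

import Mathlib

open scoped Classical

/-- An LE-condition for the poset `LE_b`: a triple `(d, s, φ)` where `d` is a finite
binary sequence, `s n < b n` for `n < |d|`, `φ n ⊆ {0,…,b n − 1}`, and for some `k`,
`|φ n| ≤ b n · 2^{−n/2^k}` for all `n ≥ |d|`. -/
structure LECond (b : ℕ → ℕ) where
  d : List Bool
  s : ℕ → ℕ
  φ : ℕ → Finset ℕ
  s_lt : ∀ n < d.length, s n < b n
  φ_sub : ∀ n, φ n ⊆ Finset.range (b n)
  bound : ∃ k : ℕ, ∀ n, d.length ≤ n →
    ((φ n).card : ℝ) ≤ (b n : ℝ) * (2 : ℝ) ^ (-(n : ℝ) / (2 : ℝ) ^ k)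

/-- Membership in `Q_k`: the witness `k` works. -/
def LECond.inQ {b : ℕ → ℕ} (p : LECond b) (k : ℕ) : Prop :=
  ∀ n, p.d.length ≤ n →
    ((p.φ n).card : ℝ) ≤ (b n : ℝ) * (2 : ℝ) ^ (-(n : ℝ) / (2 : ℝ) ^ k)

/-- Membership in `Q_{d,s,k}`: in `Q_k` with first two coordinates `d`, `s`. -/
def LECond.inQds {b : ℕ → ℕ} (p : LECond b) (d : List Bool) (s : ℕ → ℕ) (k : ℕ) : Prop :=
  p.d = d ∧ (∀ n < d.length, p.s n = s n) ∧ p.inQ k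

/-- The extension order on LE-conditions: `q ≤ p`. -/
def LECond.le {b : ℕ → ℕ} (q p : LECond b) : Prop :=
  p.d <+: q.d ∧ (∀ n < p.d.length, q.s n = p.s n) ∧ (∀ n, p.φ n ⊆ q.φ n) ∧
  ∀ n, q.d.getD n false = true → ¬ (p.d.getD n false = true) → q.s n ∉ p.φ n

/-- `d` is long for `k`: `|d| ≥ 2` and `2^{−n/2^k} ≤ 1/(n²(n+1)²)` for all `n ≥ |d|`. -/
def LongFor (k : ℕ) (d : List Bool) : Prop :=
  2 ≤ d.length ∧ ∀ n : ℕ, d.length ≤ n →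
    (2 : ℝ) ^ (-(n : ℝ) / (2 : ℝ) ^ k) ≤ 1 / ((n : ℝ) ^ 2 * ((n : ℝ) + 1) ^ 2)

lemma getD_append_replicate_false (L : List Bool) (t n : ℕ) :
    (L ++ List.replicate t false).getD n false = L.getD n false := by
  rcases lt_or_ge n L.length with h | h
  · rw [List.getD_append _ _ _ _ h]
  · rcases lt_or_ge n (L.length + t) with h2 | h2
    · rw [List.getD_eq_default _ _ h, List.getD_append_right _ _ _ _ h]
      simp only [List.getD, List.getElem?_replicate]
      split <;> simp
    · rw [List.getD_eq_default _ _ h, List.getD_eq_default]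
      simp; omega

lemma prefix_getD {L M : List Bool} (h : L <+: M) {n : ℕ} (hn : n < L.length) :
    M.getD n false = L.getD n false := by
  obtain ⟨t, rfl⟩ := h
  rw [List.getD_append _ _ _ _ hn]

lemma getD_true_lt {L : List Bool} {n : ℕ} (h : L.getD n false = true) : n < L.length := by
  by_contra hc
  rw [List.getD_eq_default _ _ (le_of_not_gt hc)] at h
  simp at h

lemma telescope (a M : ℕ) (ha : 1 ≤ a) (hM : a ≤ M) :
    ∑ n ∈ Finset.Ico a M, (1:ℝ)/((n:ℝ)*((n:ℝ)+1)) = 1/(a:ℝ) - 1/(M:ℝ) := by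
  induction M, hM using Nat.le_induction with
  | base => simp
  | succ M hM ih =>
    rw [Finset.sum_Ico_succ_top hM, ih]
    have hM0 : (0:ℝ) < (M:ℝ) := by exact_mod_cast lt_of_lt_of_le ha hM
    have h1 : (0:ℝ) < (M:ℝ) + 1 := by linarith
    push_cast
    field_simp
    ring

lemma double_count (A T : Finset ℕ) (f : ℕ → Finset ℕ) :
    ∑ i ∈ A, (T.filter (fun l => i ∈ f l)).card
      = ∑ l ∈ T, (A.filter (fun i => i ∈ f l)).card := by
  simp only [Finset.card_filter]
  exact Finset.sum_comm

lemma rpow_split {K κ : ℕ} (hk : κ < K) (n : ℕ) :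
    (2:ℝ)^(-(n:ℝ)/(2:ℝ)^κ) ≤ (2:ℝ)^(-(n:ℝ)/(2:ℝ)^K) * (2:ℝ)^(-(n:ℝ)/(2:ℝ)^K) := by
  rw [← Real.rpow_add two_pos]
  apply Real.rpow_le_rpow_of_exponent_le one_le_two
  have h1 : (0:ℝ) < (2:ℝ)^κ := by positivity
  have h2 : (0:ℝ) < (2:ℝ)^K := by positivity
  rw [← add_div, div_le_div_iff₀ h1 h2]
  have h3 : (2:ℝ)^κ * 2 ≤ (2:ℝ)^K := by
    rw [← pow_succ]
    exact pow_le_pow_right₀ one_le_two hk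
  have h4 : (0:ℝ) ≤ (n:ℝ) := Nat.cast_nonneg n
  nlinarith

/-- Forcing-free form of: `Q_{d,s,k}` (for long `d`) is `(D, 1/|d|)`-lim-linked, i.e.,
`LE_b` has ultrafilter-limits for the intervals `I_j = [2^j − 1, 2^{j+1} − 1)` (of size
`2^j`): given `(q l)_{l<ω}` in `Q_{d,s,k}`, there is a limit condition `q^∞` such that
for every extension `r` of `q^∞`, the set of `j` such that some `r′ ≤ r` extends at
least a `(1 − 1/|d|)` fraction of the `q l` for `l ∈ I_j` belongs to `D`. -/
theorem stmt11 (b : ℕ → ℕ) (hb : ∀ n, 2 ^ n ≤ b n)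
    (d : List Bool) (s : ℕ → ℕ) (k : ℕ) (hd : LongFor k d)
    (D : Ultrafilter ℕ) (hD : ∀ m : ℕ, D ≠ pure m)
    (q : ℕ → LECond b) (hq : ∀ l, (q l).inQds d s k) :
    ∃ qinf : LECond b, ∀ r : LECond b, r.le qinf →
      {j : ℕ | ∃ r' : LECond b, r'.le r ∧
        (1 - 1 / (d.length : ℝ)) * (2 : ℝ) ^ j ≤
          (((Finset.Ico (2 ^ j - 1) (2 ^ (j + 1) - 1)).filter
              fun l => r'.le (q l)).card : ℝ)} ∈ D := by
  classical
  set Ij : ℕ → Finset ℕ := fun j => Finset.Ico (2 ^ j - 1) (2 ^ (j + 1) - 1) with hIj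
  have card_Ij : ∀ j, (Ij j).card = 2 ^ j := by
    intro j
    have h1 : 1 ≤ 2 ^ j := Nat.one_le_two_pow
    have h2 : 2 ^ (j+1) = 2 ^ j * 2 := pow_succ 2 j
    rw [hIj]
    simp only [Nat.card_Ico]
    omega
  set cnt : ℕ → ℕ → ℕ → ℕ :=
    fun i n j => ((Ij j).filter (fun l => i ∈ (q l).φ n)).card with hcnt
  set P : ℕ → ℕ → Prop :=
    fun i n => {j : ℕ | (2:ℝ)^j / ((n:ℝ)*((n:ℝ)+1)) ≤ (cnt i n j : ℝ)} ∈ D with hP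
  set φinf : ℕ → Finset ℕ :=
    fun n => (Finset.range (b n)).filter (fun i => P i n) with hφinf
  have hqd : ∀ l, (q l).d = d := fun l => (hq l).1
  have hqs : ∀ l, ∀ n < d.length, (q l).s n = s n := fun l => (hq l).2.1
  have hqQ : ∀ l, ∀ n, d.length ≤ n →
      (((q l).φ n).card : ℝ) ≤ (b n : ℝ) * (2:ℝ)^(-(n:ℝ)/(2:ℝ)^k) := by
    intro l n hn
    exact (hq l).2.2 n (by rw [hqd l]; exact hn)
  have hd2 : 2 ≤ d.length := hd.1
  have hsl : ∀ n < d.length, s n < b n := by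
    intro n hn
    have h := (q 0).s_lt n (by rw [hqd 0]; exact hn)
    rwa [hqs 0 n hn] at h
  -- the limit condition
  have main_bound : ∀ n, d.length ≤ n →
      ((φinf n).card : ℝ) ≤ (b n : ℝ) * (2:ℝ)^(-(n:ℝ)/(2:ℝ)^(k+1)) := by
    intro n hn
    set e : ℝ := (2:ℝ)^(-(n:ℝ)/(2:ℝ)^(k+1)) with he_def
    have he : 0 < e := Real.rpow_pos_of_pos two_pos _
    have hee : e * e = (2:ℝ)^(-(n:ℝ)/(2:ℝ)^k) := by
      rw [he_def, ← Real.rpow_add two_pos]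
      congr 1
      have h2 : (2:ℝ)^(k+1) = (2:ℝ)^k * 2 := pow_succ 2 k
      rw [h2]
      have : ((2:ℝ)^k) ≠ 0 := by positivity
      field_simp
      ring
    have hn2 : (2:ℕ) ≤ n := le_trans hd2 hn
    have hnpos : (0:ℝ) < (n:ℝ) := by exact_mod_cast Nat.lt_of_lt_of_le (by norm_num) hn2
    have hnn1 : (0:ℝ) < (n:ℝ)*((n:ℝ)+1) := by positivity
    have hele : e ≤ 1/((n:ℝ)*((n:ℝ)+1)) := by
      have h1 := hd.2 n hn
      rw [← hee] at h1
      have hXX : 1/((n:ℝ)^2*((n:ℝ)+1)^2)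
          = (1/((n:ℝ)*((n:ℝ)+1))) * (1/((n:ℝ)*((n:ℝ)+1))) := by
        field_simp
      rw [hXX] at h1
      have hX : (0:ℝ) < 1/((n:ℝ)*((n:ℝ)+1)) := by positivity
      nlinarith
    rcases Finset.eq_empty_or_nonempty (φinf n) with hA | hA
    · rw [hA]
      simp only [Finset.card_empty, Nat.cast_zero]
      positivity
    · set A := φinf n with hA_def
      have hT : (⋂ i ∈ A, {j : ℕ | (2:ℝ)^j / ((n:ℝ)*((n:ℝ)+1)) ≤ (cnt i n j : ℝ)})
          ∈ D := by
        have := (Filter.biInter_finset_mem (f := (D : Filter ℕ)) A).mpr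
          (fun i hi => (Finset.mem_filter.mp hi).2)
        exact this
      obtain ⟨j0, hj0⟩ := Filter.nonempty_of_mem hT
      simp only [Set.mem_iInter, Set.mem_setOf_eq] at hj0
      have hsum : ∑ i ∈ A, (cnt i n j0 : ℝ) ≤ (2:ℝ)^j0 * ((b n : ℝ) * (e*e)) := by
        rw [hee]
        have hdc := double_count A (Ij j0) (fun l => (q l).φ n)
        have hcast : ∑ i ∈ A, (cnt i n j0 : ℝ)
            = ((∑ l ∈ Ij j0, (A.filter (fun i => i ∈ (q l).φ n)).card : ℕ) : ℝ) := by
          rw [← hdc]; push_cast; rfl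
        rw [hcast]
        push_cast
        calc ∑ l ∈ Ij j0, ((A.filter (fun i => i ∈ (q l).φ n)).card : ℝ)
            ≤ ∑ l ∈ Ij j0, ((b n : ℝ) * (2:ℝ)^(-(n:ℝ)/(2:ℝ)^k)) := by
              apply Finset.sum_le_sum
              intro l hl
              refine le_trans ?_ (hqQ l n hn)
              exact Nat.cast_le.mpr (Finset.card_le_card
                (fun i hi => (Finset.mem_filter.mp hi).2))
          _ = (2:ℝ)^j0 * ((b n : ℝ) * (2:ℝ)^(-(n:ℝ)/(2:ℝ)^k)) := by
              rw [Finset.sum_const, card_Ij j0]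
              push_cast
              ring
      have hlow : (A.card : ℝ) * ((2:ℝ)^j0/((n:ℝ)*((n:ℝ)+1)))
          ≤ ∑ i ∈ A, (cnt i n j0 : ℝ) := by
        have := Finset.card_nsmul_le_sum A (fun i => (cnt i n j0 : ℝ))
          ((2:ℝ)^j0/((n:ℝ)*((n:ℝ)+1))) (fun i hi => hj0 i hi)
        rwa [nsmul_eq_mul] at this
      have h2j0 : (0:ℝ) < (2:ℝ)^j0 := by positivity
      have hfin := le_trans hlow hsum
      have hbn : (0:ℝ) ≤ (b n : ℝ) := Nat.cast_nonneg _
      -- A.card ≤ nn1 * (b * e * e) ≤ b * e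
      have hcard : (A.card : ℝ) ≤ ((n:ℝ)*((n:ℝ)+1)) * ((b n : ℝ) * (e*e)) := by
        rw [div_eq_mul_inv] at hfin
        have h := mul_le_mul_of_nonneg_right hfin
          (le_of_lt (mul_pos hnn1 (inv_pos.mpr h2j0)))
        calc (A.card : ℝ)
            = (A.card : ℝ) * ((2:ℝ)^j0 * ((n:ℝ)*((n:ℝ)+1))⁻¹)
              * (((n:ℝ)*((n:ℝ)+1)) * ((2:ℝ)^j0)⁻¹) := by
              field_simp
          _ ≤ (2:ℝ)^j0 * ((b n : ℝ) * (e*e))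
              * (((n:ℝ)*((n:ℝ)+1)) * ((2:ℝ)^j0)⁻¹) := h
          _ = ((n:ℝ)*((n:ℝ)+1)) * ((b n : ℝ) * (e*e)) := by
              field_simp
      have hne1 : ((n:ℝ)*((n:ℝ)+1)) * e ≤ 1 := by
        rw [le_div_iff₀ hnn1] at hele
        linarith [mul_comm e ((n:ℝ)*((n:ℝ)+1))]
      calc (A.card : ℝ) ≤ ((n:ℝ)*((n:ℝ)+1)) * ((b n : ℝ) * (e*e)) := hcard
        _ = (((n:ℝ)*((n:ℝ)+1)) * e) * ((b n : ℝ) * e) := by ring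
        _ ≤ 1 * ((b n : ℝ) * e) := by
            apply mul_le_mul_of_nonneg_right hne1
            positivity
        _ = (b n : ℝ) * e := one_mul _
  refine ⟨{ d := d, s := fun n => if n < d.length then s n else 0, φ := φinf,
            s_lt := by intro n hn; simpa [hn] using hsl n hn,
            φ_sub := fun n => Finset.filter_subset _ _,
            bound := ⟨k+1, main_bound⟩ }, ?_⟩
  intro r hr
  obtain ⟨hpre, hs, hφ, hnot⟩ := hr
  obtain ⟨kr, hkr⟩ := r.bound
  have hpre' : d <+: r.d := hpre
  have hdr : d.length ≤ r.d.length := hpre'.length_le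
  set crit : Finset ℕ := (Finset.range r.d.length).filter
    (fun n => r.d.getD n false = true ∧ ¬ d.getD n false = true) with hcrit_def
  have hcrit : ∀ n ∈ crit, d.length ≤ n ∧ n < r.d.length ∧
      r.d.getD n false = true ∧ ¬ d.getD n false = true := by
    intro n hn
    rw [hcrit_def, Finset.mem_filter, Finset.mem_range] at hn
    obtain ⟨h1, h2, h3⟩ := hn
    refine ⟨?_, h1, h2, h3⟩
    by_contra hc
    exact h3 (by rw [← prefix_getD hpre' (lt_of_not_ge hc)]; exact h2)
  have hBn : ∀ n ∈ crit,
      {j : ℕ | (cnt (r.s n) n j : ℝ) < (2:ℝ)^j/((n:ℝ)*((n:ℝ)+1))} ∈ D := by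
    intro n hn
    obtain ⟨hdn, hlt, htrue, hdf⟩ := hcrit n hn
    have hn2 : (2:ℕ) ≤ n := le_trans hd2 hdn
    have hnpos : (0:ℝ) < (n:ℝ) := by exact_mod_cast Nat.lt_of_lt_of_le (by norm_num) hn2
    have hnn1 : (0:ℝ) < (n:ℝ)*((n:ℝ)+1) := by positivity
    have hnotin : r.s n ∉ φinf n := hnot n htrue hdf
    by_cases hrb : r.s n < b n
    · have hnP : ¬ P (r.s n) n := fun hPp =>
        hnotin (Finset.mem_filter.mpr ⟨Finset.mem_range.mpr hrb, hPp⟩)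
      have hcompl := (Ultrafilter.compl_mem_iff_notMem (f := D)).mpr hnP
      have hset : {j : ℕ | (cnt (r.s n) n j : ℝ) < (2:ℝ)^j/((n:ℝ)*((n:ℝ)+1))}
          = {j : ℕ | (2:ℝ)^j/((n:ℝ)*((n:ℝ)+1)) ≤ (cnt (r.s n) n j : ℝ)}ᶜ := by
        ext j; simp [not_le]
      rw [hset]
      exact hcompl
    · have hcnt0 : ∀ j, cnt (r.s n) n j = 0 := by
        intro j
        rw [hcnt]
        simp only [Finset.card_eq_zero, Finset.filter_eq_empty_iff]
        intro l _ hmem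
        exact hrb (Finset.mem_range.mp ((q l).φ_sub n hmem))
      have huniv : {j : ℕ | (cnt (r.s n) n j : ℝ) < (2:ℝ)^j/((n:ℝ)*((n:ℝ)+1))}
          = Set.univ := by
        ext j
        simp only [Set.mem_setOf_eq, Set.mem_univ, iff_true, hcnt0 j, Nat.cast_zero]
        positivity
      rw [huniv]
      exact Filter.univ_mem
  have hSD : (⋂ n ∈ crit,
      {j : ℕ | (cnt (r.s n) n j:ℝ) < (2:ℝ)^j/((n:ℝ)*((n:ℝ)+1))}) ∈ D :=
    (Filter.biInter_finset_mem (f := (D : Filter ℕ)) crit).mpr hBn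
  refine Filter.mem_of_superset hSD ?_
  intro j hj
  simp only [Set.mem_iInter, Set.mem_setOf_eq] at hj
  set S : Finset ℕ := (Ij j).filter (fun l => ∀ n ∈ crit, r.s n ∉ (q l).φ n) with hS_def
  have hj2 : (0:ℝ) < (2:ℝ)^j := by positivity
  have hdlen1 : (1:ℝ) ≤ (d.length:ℝ) := by exact_mod_cast le_trans one_le_two hd2
  have hcards : (1 - 1/(d.length:ℝ)) * (2:ℝ)^j ≤ (S.card : ℝ) := by
    have hsplit := Finset.card_filter_add_card_filter_not
      (s := Ij j) (p := fun l => ∀ n ∈ crit, r.s n ∉ (q l).φ n)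
    rw [card_Ij j] at hsplit
    set Bad := (Ij j).filter (fun l => ¬ ∀ n ∈ crit, r.s n ∉ (q l).φ n) with hBad_def
    have hbadsub : Bad ⊆ crit.biUnion
        (fun n => (Ij j).filter (fun l => r.s n ∈ (q l).φ n)) := by
      intro l hl
      rw [hBad_def, Finset.mem_filter] at hl
      obtain ⟨hl1, hl2⟩ := hl
      push_neg at hl2
      obtain ⟨n, hn1, hn2⟩ := hl2
      exact Finset.mem_biUnion.mpr ⟨n, hn1, Finset.mem_filter.mpr ⟨hl1, hn2⟩⟩
    have hbadcard : Bad.card ≤ ∑ n ∈ crit, cnt (r.s n) n j :=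
      le_trans (Finset.card_le_card hbadsub) Finset.card_biUnion_le
    have hcast := congrArg (Nat.cast : ℕ → ℝ) hsplit
    push_cast at hcast
    rcases Finset.eq_empty_or_nonempty crit with hce | hcne
    · have hb0 : Bad.card = 0 := by
        rw [hce] at hbadcard; simpa using hbadcard
      rw [hb0] at hcast
      push_cast at hcast
      have h0 : (0:ℝ) ≤ 1/(d.length:ℝ) := by positivity
      nlinarith
    · have hstrict : (∑ n ∈ crit, (cnt (r.s n) n j : ℝ))
          < ∑ n ∈ crit, (2:ℝ)^j/((n:ℝ)*((n:ℝ)+1)) :=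
        Finset.sum_lt_sum_of_nonempty hcne (fun n hn => hj n hn)
      have hsubIco : crit ⊆ Finset.Ico d.length r.d.length := by
        intro n hn
        obtain ⟨h1, h2, _, _⟩ := hcrit n hn
        exact Finset.mem_Ico.mpr ⟨h1, h2⟩
      have hsum2 : ∑ n ∈ crit, (2:ℝ)^j/((n:ℝ)*((n:ℝ)+1))
          ≤ (2:ℝ)^j * (1/(d.length:ℝ)) := by
        calc ∑ n ∈ crit, (2:ℝ)^j/((n:ℝ)*((n:ℝ)+1))
            = (2:ℝ)^j * ∑ n ∈ crit, (1:ℝ)/((n:ℝ)*((n:ℝ)+1)) := by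
              rw [Finset.mul_sum]
              exact Finset.sum_congr rfl (fun n _ => by rw [mul_one_div])
          _ ≤ (2:ℝ)^j * ∑ n ∈ Finset.Ico d.length r.d.length,
                (1:ℝ)/((n:ℝ)*((n:ℝ)+1)) := by
              apply mul_le_mul_of_nonneg_left _ (le_of_lt hj2)
              apply Finset.sum_le_sum_of_subset_of_nonneg hsubIco
              intro i _ _
              positivity
          _ ≤ (2:ℝ)^j * (1/(d.length:ℝ)) := by
              apply mul_le_mul_of_nonneg_left _ (le_of_lt hj2)
              rw [telescope d.length r.d.length (le_trans one_le_two hd2) hdr]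
              have h0 : (0:ℝ) ≤ 1/(r.d.length:ℝ) := by positivity
              linarith
      have hbsum : (Bad.card : ℝ) ≤ ∑ n ∈ crit, (cnt (r.s n) n j : ℝ) := by
        exact_mod_cast hbadcard
      nlinarith
  -- build the extension r'
  set K := max kr k + 1 with hK_def
  have hkrK : kr < K := Nat.lt_succ_of_le (le_max_left _ _)
  have hkK : k < K := Nat.lt_succ_of_le (le_max_right _ _)
  set m := max r.d.length (2^K * (j+1)) with hm_def
  have hm1 : r.d.length ≤ m := le_max_left _ _
  have hm2 : 2^K*(j+1) ≤ m := le_max_right _ _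
  have hlen : (r.d ++ List.replicate (m - r.d.length) false).length = m := by
    simp only [List.length_append, List.length_replicate]
    omega
  have hScard2j : S.card ≤ 2^j := by
    rw [← card_Ij j]
    exact Finset.card_le_card (Finset.filter_subset _ _)
  have hbound' : ∀ n, m ≤ n →
      (((r.φ n ∪ S.biUnion (fun l => (q l).φ n)).card : ℕ) : ℝ)
        ≤ (b n : ℝ) * (2:ℝ)^(-(n:ℝ)/(2:ℝ)^K) := by
    intro n hn
    have hnr : r.d.length ≤ n := le_trans hm1 hn
    have hnd : d.length ≤ n := le_trans hdr hnr
    set e : ℝ := (2:ℝ)^(-(n:ℝ)/(2:ℝ)^K) with he_def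
    have he : 0 < e := Real.rpow_pos_of_pos two_pos _
    have hbn : (0:ℝ) ≤ (b n : ℝ) := Nat.cast_nonneg _
    have hcard1 : ((r.φ n).card : ℝ) ≤ (b n:ℝ) * (e*e) :=
      le_trans (hkr n hnr) (mul_le_mul_of_nonneg_left (rpow_split hkrK n) hbn)
    have hcard2 : (((S.biUnion (fun l => (q l).φ n)).card : ℕ) : ℝ)
        ≤ (2:ℝ)^j * ((b n:ℝ) * (e*e)) := by
      have h1 : (S.biUnion (fun l => (q l).φ n)).card ≤ ∑ l ∈ S, ((q l).φ n).card :=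
        Finset.card_biUnion_le
      have h2 : ((∑ l ∈ S, ((q l).φ n).card : ℕ) : ℝ)
          ≤ ∑ l ∈ S, ((b n:ℝ) * (e*e)) := by
        push_cast
        apply Finset.sum_le_sum
        intro l _
        exact le_trans (hqQ l n hnd) (mul_le_mul_of_nonneg_left (rpow_split hkK n) hbn)
      have h3 : (∑ l ∈ S, ((b n:ℝ)*(e*e))) = (S.card : ℝ) * ((b n:ℝ)*(e*e)) := by
        rw [Finset.sum_const, nsmul_eq_mul]
      have h4 : (S.card : ℝ) ≤ (2:ℝ)^j := by exact_mod_cast hScard2j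
      calc (((S.biUnion (fun l => (q l).φ n)).card : ℕ) : ℝ)
          ≤ ((∑ l ∈ S, ((q l).φ n).card : ℕ) : ℝ) := Nat.cast_le.mpr h1
        _ ≤ (S.card : ℝ) * ((b n:ℝ)*(e*e)) := by rw [← h3]; exact h2
        _ ≤ (2:ℝ)^j * ((b n:ℝ)*(e*e)) :=
            mul_le_mul_of_nonneg_right h4 (by positivity)
    have hsmall : (1 + (2:ℝ)^j) * e ≤ 1 := by
      have hnge : ((2:ℝ)^K * ((j:ℝ)+1)) ≤ (n:ℝ) := by
        have := le_trans hm2 hn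
        exact_mod_cast this
      have hKpos : (0:ℝ) < (2:ℝ)^K := by positivity
      have hexp : -(n:ℝ)/(2:ℝ)^K ≤ -((j:ℝ)+1) := by
        rw [div_le_iff₀ hKpos]
        nlinarith
      have he1 : e ≤ (2:ℝ)^(-((j:ℝ)+1)) :=
        Real.rpow_le_rpow_of_exponent_le one_le_two hexp
      have he2 : (2:ℝ)^(-((j:ℝ)+1)) = ((2:ℝ)^(j+1))⁻¹ := by
        rw [← Real.rpow_natCast 2 (j+1), ← Real.rpow_neg (by norm_num : (0:ℝ) ≤ 2)]
        congr 1
        push_cast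
        ring
      have h1j : 1 + (2:ℝ)^j ≤ (2:ℝ)^(j+1) := by
        have : (1:ℝ) ≤ (2:ℝ)^j := one_le_pow₀ one_le_two
        calc 1 + (2:ℝ)^j ≤ (2:ℝ)^j + (2:ℝ)^j := by linarith
          _ = (2:ℝ)^(j+1) := by ring
      have h2j1pos : (0:ℝ) < (2:ℝ)^(j+1) := by positivity
      calc (1 + (2:ℝ)^j) * e ≤ (1 + (2:ℝ)^j) * ((2:ℝ)^(j+1))⁻¹ := by
            rw [← he2]
            exact mul_le_mul_of_nonneg_left he1 (by positivity)
        _ ≤ (2:ℝ)^(j+1) * ((2:ℝ)^(j+1))⁻¹ :=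
            mul_le_mul_of_nonneg_right h1j (by positivity)
        _ = 1 := mul_inv_cancel₀ (ne_of_gt h2j1pos)
    have hu : ((r.φ n ∪ S.biUnion (fun l => (q l).φ n)).card : ℝ)
        ≤ ((r.φ n).card : ℝ) + ((S.biUnion (fun l => (q l).φ n)).card : ℝ) := by
      exact_mod_cast Finset.card_union_le _ _
    calc ((r.φ n ∪ S.biUnion (fun l => (q l).φ n)).card : ℝ)
        ≤ (b n:ℝ) * (e*e) + (2:ℝ)^j * ((b n:ℝ) * (e*e)) := by linarith
      _ = ((1 + (2:ℝ)^j) * e) * ((b n:ℝ) * e) := by ring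
      _ ≤ 1 * ((b n:ℝ) * e) :=
          mul_le_mul_of_nonneg_right hsmall (by positivity)
      _ = (b n:ℝ) * e := one_mul _
  simp only [Set.mem_setOf_eq]
  refine ⟨{ d := r.d ++ List.replicate (m - r.d.length) false,
            s := fun n => if n < r.d.length then r.s n else 0,
            φ := fun n => r.φ n ∪ S.biUnion (fun l => (q l).φ n),
            s_lt := ?_, φ_sub := ?_, bound := ⟨K, ?_⟩ }, ⟨?_, ?_, ?_, ?_⟩, ?_⟩
  · intro n _
    show (if n < r.d.length then r.s n else 0) < b n
    by_cases h : n < r.d.length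
    · rw [if_pos h]; exact r.s_lt n h
    · rw [if_neg h]
      have h1 := hb n
      have h2 : 0 < 2^n := Nat.pow_pos (by norm_num)
      omega
  · intro n
    exact Finset.union_subset (r.φ_sub n)
      (Finset.biUnion_subset.mpr fun l _ => (q l).φ_sub n)
  · intro n hn
    rw [hlen] at hn
    exact hbound' n hn
  · exact List.prefix_append _ _
  · intro n hn
    show (if n < r.d.length then r.s n else 0) = r.s n
    rw [if_pos hn]
  · intro n
    exact Finset.subset_union_left
  · intro n h1 h2
    rw [getD_append_replicate_false] at h1
    exact absurd h1 h2
  · have hsub : S ⊆ (Ij j).filter (fun l => LECond.le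
        { d := r.d ++ List.replicate (m - r.d.length) false,
          s := fun n => if n < r.d.length then r.s n else 0,
          φ := fun n => r.φ n ∪ S.biUnion (fun l => (q l).φ n),
          s_lt := by
            intro n _
            show (if n < r.d.length then r.s n else 0) < b n
            by_cases h : n < r.d.length
            · rw [if_pos h]; exact r.s_lt n h
            · rw [if_neg h]
              have h1 := hb n
              have h2 : 0 < 2^n := Nat.pow_pos (by norm_num)
              omega,
          φ_sub := fun n => Finset.union_subset (r.φ_sub n)
            (Finset.biUnion_subset.mpr fun l _ => (q l).φ_sub n),
          bound := ⟨K, fun n hn => hbound' n (hlen ▸ hn)⟩ } (q l)) := by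
      intro l hl
      have hlmem := Finset.mem_filter.mp hl
      refine Finset.mem_filter.mpr ⟨hlmem.1, ?_, ?_, ?_, ?_⟩
      · rw [hqd l]
        exact hpre'.trans (List.prefix_append _ _)
      · intro n hn
        rw [hqd l] at hn
        have hnr : n < r.d.length := lt_of_lt_of_le hn hdr
        have h2 : r.s n = s n := by
          have h3 := hs n hn
          simpa [hn] using h3
        show (if n < r.d.length then r.s n else 0) = (q l).s n
        rw [hqs l n hn, if_pos hnr]
        exact h2
      · intro n
        exact le_trans (Finset.subset_biUnion_of_mem (fun l => (q l).φ n) hl)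
          Finset.subset_union_right
      · intro n h1 h2
        rw [hqd l] at h2
        rw [getD_append_replicate_false] at h1
        have hnr : n < r.d.length := getD_true_lt h1
        have hncrit : n ∈ crit := by
          rw [hcrit_def]
          exact Finset.mem_filter.mpr ⟨Finset.mem_range.mpr hnr, h1, h2⟩
        show (if n < r.d.length then r.s n else 0) ∉ (q l).φ n
        rw [if_pos hnr]
        exact hlmem.2 n hncrit
    calc (1-1/(d.length:ℝ))*(2:ℝ)^j ≤ (S.card:ℝ) := hcards
      _ ≤ _ := Nat.cast_le.mpr (Finset.card_le_card hsub)
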